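/- arXiv:2404.09244 — 2 statements merged into one kernel-verified Lean document; each statement's English description precedes it below -/
import Mathlib

section
/- For k ∈ ℕ with k ≥ 1, let N = 2^k, let X_0,…,X_{N−1} be i.i.d. standard normal random variables, and set τ*(k) = √(2·(log 2)·k·(1 − 1/√k)). Then P(max_{0 ≤ n ≤ N−1} X_n < τ*(k)) ≤ exp(−2^{√k} · (1/√(2π)) · √(2(log 2)k(1−1/√k)) / (1 + 2(log 2)k(1−1/√k))); in particular, lim_{k→∞} 2^k · P(max_{0 ≤ n ≤ N−1} X_n < τ*(k)) = 0, i.e., the lower-tail probability of the maximum is o(2^{−k}). -/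
open MeasureTheory ProbabilityTheory Filter

section Aux

open Set

private lemma myDeriv (x : ℝ) : HasDerivAt (fun x : ℝ => -(Real.exp (-x^2/2) * (x/(1+x^2))))
    (Real.exp (-x^2/2) * ((x^4+2*x^2-1)/(1+x^2)^2)) x := by
  have hd : (1:ℝ) + x^2 ≠ 0 := by positivity
  have h1 : HasDerivAt (fun x : ℝ => Real.exp (-x^2/2)) (Real.exp (-x^2/2) * (-x)) x := by
    have : HasDerivAt (fun x : ℝ => -x^2/2) (-x) x := by
      have := ((hasDerivAt_pow 2 x).neg.div_const 2); simpa using this.congr_deriv (by ring)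
    simpa using this.exp
  have h2 : HasDerivAt (fun x : ℝ => x/(1+x^2)) ((1*(1+x^2) - x*(2*x))/(1+x^2)^2) x := by
    exact (hasDerivAt_id x).div (by simpa using (hasDerivAt_pow 2 x).const_add 1) hd
  have h3 := (h1.mul h2).neg
  refine h3.congr_deriv ?_
  field_simp
  ring

private lemma ratio_abs_le (x : ℝ) : |(x^4+2*x^2-1)/(1+x^2)^2| ≤ 1 := by
  rw [abs_div, div_le_one (by positivity)]
  rw [abs_of_nonneg (a := (1+x^2)^2) (by positivity)]
  rw [abs_le]
  constructor <;> nlinarith [sq_nonneg x, sq_nonneg (x^2)]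

private lemma exp_integrable : Integrable (fun x : ℝ => Real.exp (-x^2/2)) := by
  have := integrable_exp_neg_mul_sq (b := (1:ℝ)/2) (by norm_num)
  convert this using 2 with x
  ring_nf

private lemma f'_integrable (τ : ℝ) :
    IntegrableOn (fun x : ℝ => Real.exp (-x^2/2) * ((x^4+2*x^2-1)/(1+x^2)^2)) (Ioi τ) := by
  refine Integrable.mono (exp_integrable.restrict) ?_ ?_
  · apply Continuous.aestronglyMeasurable
    fun_prop (disch := intro x; positivity)
  · refine ae_of_all _ fun x => ?_
    rw [norm_mul, Real.norm_eq_abs, Real.norm_eq_abs, abs_of_nonneg (Real.exp_pos _).le]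
    calc Real.exp (-x^2/2) * |(x^4+2*x^2-1)/(1+x^2)^2|
        ≤ Real.exp (-x^2/2) * 1 := by
          exact mul_le_mul_of_nonneg_left (ratio_abs_le x) (Real.exp_pos _).le
      _ = Real.exp (-x^2/2) := mul_one _

private lemma f_tendsto :
    Tendsto (fun x : ℝ => -(Real.exp (-x^2/2) * (x/(1+x^2)))) atTop (nhds 0) := by
  rw [← neg_zero]
  apply Tendsto.neg
  have h1 : Tendsto (fun x : ℝ => Real.exp (-x^2/2)) atTop (nhds 0) := by
    apply Real.tendsto_exp_atBot.comp
    have : Tendsto (fun x : ℝ => x^2) atTop atTop := tendsto_pow_atTop two_ne_zero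
    exact (tendsto_neg_atTop_atBot.comp this).atBot_div_const two_pos
  have h2 : Tendsto (fun x : ℝ => x/(1+x^2)) atTop (nhds 0) := by
    apply tendsto_of_tendsto_of_tendsto_of_le_of_le' (g := fun _ : ℝ => (0:ℝ))
      (h := fun x : ℝ => 1/x) tendsto_const_nhds
      (by simpa using tendsto_inv_atTop_zero)
    · filter_upwards [eventually_ge_atTop (1:ℝ)] with x hx
      positivity
    · filter_upwards [eventually_ge_atTop (1:ℝ)] with x hx
      rw [div_le_div_iff₀ (by positivity) (by linarith)]
      nlinarith
  simpa using h1.mul h2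

private lemma tail_integral_lb (τ : ℝ) :
    Real.exp (-τ^2/2) * (τ/(1+τ^2)) ≤ ∫ x in Ioi τ, Real.exp (-x^2/2) := by
  have key := integral_Ioi_of_hasDerivAt_of_tendsto' (f' := fun x : ℝ =>
      Real.exp (-x^2/2) * ((x^4+2*x^2-1)/(1+x^2)^2))
    (fun x _ => myDeriv x) (f'_integrable τ) f_tendsto
  rw [zero_sub, neg_neg] at key
  rw [← key]
  apply setIntegral_mono_on (f'_integrable τ) (exp_integrable.restrict) measurableSet_Ioi
  intro x _
  calc Real.exp (-x^2/2) * ((x^4+2*x^2-1)/(1+x^2)^2)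
      ≤ Real.exp (-x^2/2) * 1 := by
        refine mul_le_mul_of_nonneg_left ?_ (Real.exp_pos _).le
        exact (le_abs_self _).trans (ratio_abs_le x)
    _ = _ := mul_one _

private lemma gaussian_tail_lb (c : ℝ) :
    (Real.sqrt (2*Real.pi))⁻¹ * (Real.exp (-c^2/2) * (c/(1+c^2))) ≤
      ((gaussianReal 0 1) (Set.Ici c)).toReal := by
  rw [gaussianReal_apply_eq_integral 0 one_ne_zero (Set.Ici c),
    ENNReal.toReal_ofReal (integral_nonneg (fun x => gaussianPDFReal_nonneg _ _ _))]
  have hpdf : ∀ x : ℝ, gaussianPDFReal 0 1 x = (Real.sqrt (2*Real.pi))⁻¹ * Real.exp (-x^2/2) := by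
    intro x
    simp only [gaussianPDFReal, NNReal.coe_one, mul_one, sub_zero]
  simp only [hpdf]
  rw [MeasureTheory.integral_Ici_eq_integral_Ioi, integral_const_mul]
  exact mul_le_mul_of_nonneg_left (tail_integral_lb c) (by positivity)

private lemma prob_eq {Ω : Type*} [MeasureSpace Ω] [IsProbabilityMeasure (ℙ : Measure Ω)]
    (X : ℕ → Ω → ℝ) (hXm : ∀ n, Measurable (X n))
    (hXd : ∀ n, Measure.map (X n) ℙ = gaussianReal 0 1)
    (hindep : iIndepFun X ℙ) (N : ℕ) (c : ℝ) :
    (ℙ {ω | ∀ n < N, X n ω < c}).toReal = ((gaussianReal 0 1 (Set.Iio c)).toReal)^N := by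
  have hset : {ω | ∀ n < N, X n ω < c} = ⋂ n ∈ Finset.range N, X n ⁻¹' Set.Iio c := by
    ext ω; simp [Set.mem_iInter]
  rw [hset, hindep.meas_biInter (fun i _ => ⟨Set.Iio c, measurableSet_Iio, rfl⟩)]
  have hq : ∀ n : ℕ, ℙ (X n ⁻¹' Set.Iio c) = gaussianReal 0 1 (Set.Iio c) := fun n => by
    rw [← hXd n, Measure.map_apply (hXm n) measurableSet_Iio]
  simp only [hq]
  rw [Finset.prod_const, Finset.card_range, ENNReal.toReal_pow]

private lemma iio_le_exp (c : ℝ) :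
    (gaussianReal 0 1 (Set.Iio c)).toReal ≤
      Real.exp (-((gaussianReal 0 1 (Set.Ici c)).toReal)) := by
  have h1 : gaussianReal 0 1 (Set.Iio c) = 1 - gaussianReal 0 1 (Set.Ici c) := by
    rw [← Set.compl_Ici]
    exact prob_compl_eq_one_sub measurableSet_Ici
  rw [h1, ENNReal.toReal_sub_of_le prob_le_one ENNReal.one_ne_top, ENNReal.toReal_one]
  have := Real.add_one_le_exp (-(gaussianReal 0 1 (Set.Ici c)).toReal)
  linarith

private lemma a_nonneg {k : ℕ} (hk : 1 ≤ k) :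
    0 ≤ 2 * Real.log 2 * k * (1 - 1 / Real.sqrt k) := by
  have hk1 : (1:ℝ) ≤ k := by exact_mod_cast hk
  have hs : (1:ℝ) ≤ Real.sqrt k := by
    rw [show (1:ℝ) = Real.sqrt 1 by simp]
    exact Real.sqrt_le_sqrt hk1
  have h2 : 1 / Real.sqrt k ≤ 1 := by
    rw [div_le_one (by linarith)]; exact hs
  have := Real.log_nonneg (by norm_num : (1:ℝ) ≤ 2)
  have : (0:ℝ) ≤ 2 * Real.log 2 * k := by positivity
  nlinarith

private lemma a_eq (k : ℕ) :
    2 * Real.log 2 * k * (1 - 1 / Real.sqrt k)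
      = 2 * Real.log 2 * ((k:ℝ) - Real.sqrt k) := by
  have h : (k:ℝ) * (1 / Real.sqrt k) = Real.sqrt k := by
    rw [mul_one_div, Real.div_sqrt]
  have expand : 2 * Real.log 2 * (k:ℝ) * (1 - 1 / Real.sqrt k)
      = 2 * Real.log 2 * ((k:ℝ) - (k:ℝ) * (1 / Real.sqrt k)) := by ring
  rw [expand, h]

private lemma two_pow_exp (k : ℕ) :
    (2:ℝ)^k * Real.exp (-(2 * Real.log 2 * k * (1 - 1 / Real.sqrt k))/2)
      = (2:ℝ)^(Real.sqrt k) := by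
  rw [a_eq k, ← Real.rpow_natCast 2 k, Real.rpow_def_of_pos two_pos,
    Real.rpow_def_of_pos two_pos, ← Real.exp_add]
  congr 1
  ring

private lemma part1 {Ω : Type*} [MeasureSpace Ω] [IsProbabilityMeasure (ℙ : Measure Ω)]
    (X : ℕ → Ω → ℝ) (hXm : ∀ n, Measurable (X n))
    (hXd : ∀ n, Measure.map (X n) ℙ = gaussianReal 0 1)
    (hindep : iIndepFun X ℙ) (k : ℕ) (hk : 1 ≤ k) :
    (ℙ {ω | ∀ n < 2 ^ k,
        X n ω < Real.sqrt (2 * Real.log 2 * k * (1 - 1 / Real.sqrt k))}).toReal ≤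
      Real.exp (-((2 : ℝ) ^ (Real.sqrt k) * (Real.sqrt (2 * Real.pi))⁻¹ *
        (Real.sqrt (2 * Real.log 2 * k * (1 - 1 / Real.sqrt k)) /
          (1 + 2 * Real.log 2 * k * (1 - 1 / Real.sqrt k))))) := by
  set a : ℝ := 2 * Real.log 2 * k * (1 - 1 / Real.sqrt k) with ha_def
  set t : ℝ := Real.sqrt a with ht_def
  have ha : 0 ≤ a := a_nonneg hk
  have ht2 : t^2 = a := Real.sq_sqrt ha
  set p : ℝ := ((gaussianReal 0 1) (Set.Ici t)).toReal with hp_def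
  have hp : (Real.sqrt (2*Real.pi))⁻¹ * (Real.exp (-a/2) * (t/(1+a))) ≤ p := by
    have := gaussian_tail_lb t
    rwa [ht2] at this
  rw [prob_eq X hXm hXd hindep (2^k) t]
  calc ((gaussianReal 0 1 (Set.Iio t)).toReal)^(2^k)
      ≤ (Real.exp (-p))^(2^k) :=
        pow_le_pow_left₀ ENNReal.toReal_nonneg (iio_le_exp t) _
    _ = Real.exp ((2^k : ℕ) * (-p)) := (Real.exp_nat_mul _ _).symm
    _ ≤ Real.exp (-((2:ℝ)^(Real.sqrt k) * (Real.sqrt (2*Real.pi))⁻¹ * (t/(1+a)))) := by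
        rw [Real.exp_le_exp]
        have hcast : ((2^k : ℕ) : ℝ) = (2:ℝ)^k := by push_cast; ring
        rw [hcast, mul_neg, neg_le_neg_iff]
        calc (2:ℝ)^(Real.sqrt k) * (Real.sqrt (2*Real.pi))⁻¹ * (t/(1+a))
            = (2:ℝ)^k * ((Real.sqrt (2*Real.pi))⁻¹ * (Real.exp (-a/2) * (t/(1+a)))) := by
              rw [← two_pow_exp k]; ring
          _ ≤ (2:ℝ)^k * p := by
              exact mul_le_mul_of_nonneg_left hp (by positivity)

private lemma Ek_ge (k : ℕ) (hk : 4 ≤ k) :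
    (k:ℝ)^2 / 26873856 ≤ (2:ℝ)^(Real.sqrt k) * (Real.sqrt (2*Real.pi))⁻¹ *
      (Real.sqrt (2 * Real.log 2 * k * (1 - 1/Real.sqrt k)) /
        (1 + 2 * Real.log 2 * k * (1 - 1/Real.sqrt k))) := by
  have hkr : (4:ℝ) ≤ k := by exact_mod_cast hk
  have hk0 : (0:ℝ) < k := by linarith
  have hl2 : (1/2:ℝ) ≤ Real.log 2 := by
    have := Real.log_two_gt_d9; linarith
  have hl2' : Real.log 2 ≤ 1 := by
    have := Real.log_two_lt_d9; linarith
  have hs0 : (0:ℝ) ≤ Real.sqrt k := Real.sqrt_nonneg _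
  have hs2 : (2:ℝ) ≤ Real.sqrt k := by
    rw [show (2:ℝ) = Real.sqrt 4 by rw [show (4:ℝ) = 2^2 by norm_num, Real.sqrt_sq]; norm_num]
    exact Real.sqrt_le_sqrt hkr
  have hinv : 1 / Real.sqrt k ≤ 1/2 := by
    rw [div_le_div_iff₀ (by linarith) (by norm_num)]; linarith
  have hinv0 : 0 ≤ 1 / Real.sqrt k := by positivity
  set a : ℝ := 2 * Real.log 2 * k * (1 - 1/Real.sqrt k) with ha_def
  have hb : (k:ℝ)/2 ≤ (k:ℝ) * (1 - 1/Real.sqrt k) := by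
    nlinarith [mul_nonneg hk0.le (by linarith : (0:ℝ) ≤ 1/2 - 1/Real.sqrt k)]
  have hc : (k:ℝ)*(1-1/Real.sqrt k) ≤ k := by
    nlinarith [mul_nonneg hk0.le hinv0]
  have hbc0 : (0:ℝ) ≤ (k:ℝ)*(1-1/Real.sqrt k) := by nlinarith
  have ha1 : (1:ℝ) ≤ a := by
    have h := mul_le_mul hl2 hb (by positivity) (by linarith)
    have hae : a = 2 * (Real.log 2 * ((k:ℝ) * (1 - 1/Real.sqrt k))) := by ring
    rw [hae]; nlinarith
  have ha3k : a ≤ 2 * k := by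
    have h := mul_le_mul hl2' hc hbc0 (by norm_num)
    have hae : a = 2 * (Real.log 2 * ((k:ℝ) * (1 - 1/Real.sqrt k))) := by ring
    rw [hae]; nlinarith
  have ht1 : (1:ℝ) ≤ Real.sqrt a := by
    rw [show (1:ℝ) = Real.sqrt 1 by simp]; exact Real.sqrt_le_sqrt ha1
  have h1 : (k:ℝ)^3 / 2985984 ≤ (2:ℝ)^(Real.sqrt k) := by
    have hrw : (2:ℝ)^(Real.sqrt k) = Real.exp (Real.log 2 * Real.sqrt k) :=
      Real.rpow_def_of_pos two_pos _
    rw [hrw]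
    set x : ℝ := Real.log 2 * Real.sqrt k with hx_def
    have hx0 : 0 ≤ x := by positivity
    have e1 : (x/6 + 1)^6 ≤ Real.exp x := by
      calc (x/6 + 1)^6 ≤ (Real.exp (x/6))^6 := by
            apply pow_le_pow_left₀ (by positivity) (Real.add_one_le_exp _)
        _ = Real.exp x := by rw [← Real.exp_nat_mul]; congr 1; push_cast; ring
    have e2 : ((Real.sqrt k)/12)^6 ≤ (x/6 + 1)^6 := by
      apply pow_le_pow_left₀ (by positivity)
      have : Real.sqrt k / 12 ≤ x / 6 := by
        rw [hx_def, div_le_div_iff₀ (by norm_num) (by norm_num)]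
        nlinarith
      linarith
    have e3 : ((Real.sqrt k)/12)^6 = (k:ℝ)^3 / 2985984 := by
      rw [div_pow]
      congr 1
      · rw [show (6:ℕ) = 2*3 by norm_num, pow_mul, Real.sq_sqrt hk0.le]
      · norm_num
    linarith
  have h2 : (1/3:ℝ) ≤ (Real.sqrt (2*Real.pi))⁻¹ := by
    have hle : Real.sqrt (2*Real.pi) ≤ 3 := by
      rw [show (3:ℝ) = Real.sqrt 9 by rw [show (9:ℝ) = 3^2 by norm_num, Real.sqrt_sq]; norm_num]
      apply Real.sqrt_le_sqrt
      nlinarith [Real.pi_le_four]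
    have hpos : 0 < Real.sqrt (2*Real.pi) := Real.sqrt_pos.mpr (by positivity)
    rw [le_inv_comm₀ (by norm_num) hpos]
    linarith
  have h3 : 1/(3*(k:ℝ)) ≤ Real.sqrt a / (1 + a) := by
    have hpos : (0:ℝ) < 1 + a := by linarith
    calc 1/(3*(k:ℝ)) ≤ 1/(1+a) := by
          apply one_div_le_one_div_of_le hpos; nlinarith
      _ ≤ Real.sqrt a / (1+a) := by gcongr
  calc (k:ℝ)^2 / 26873856 = ((k:ℝ)^3/2985984) * (1/3) * (1/(3*(k:ℝ))) := by
        field_simp; ring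
    _ ≤ (2:ℝ)^(Real.sqrt k) * (Real.sqrt (2*Real.pi))⁻¹ * (Real.sqrt a / (1 + a)) := by
        apply mul_le_mul (mul_le_mul h1 h2 (by norm_num) (by positivity)) h3
          (by positivity) (by positivity)

end Aux

/-- **Lemma 1 (second part).**
For `k ≥ 1`, `N = 2^k`, `X_0, …, X_{N−1}` i.i.d. standard normal, and
`τ*(k) = √(2·(log 2)·k·(1 − 1/√k))`, the lower-tail probability of the maximum
satisfies
`P(max_n X_n < τ*(k)) ≤ exp(−2^{√k}·(1/√(2π))·τ*(k)/(1 + τ*(k)²))`,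
and in particular `2^k · P(max_n X_n < τ*(k)) → 0`, i.e. it is `o(2^{−k})`. -/
theorem max_iid_gaussian_lower_tail_superexponential
    {Ω : Type*} [MeasureSpace Ω] [IsProbabilityMeasure (ℙ : Measure Ω)]
    (X : ℕ → Ω → ℝ)
    (hXm : ∀ n, Measurable (X n))
    (hXd : ∀ n, Measure.map (X n) ℙ = gaussianReal 0 1)
    (hindep : iIndepFun X ℙ) :
    (∀ k : ℕ, 1 ≤ k →
      (ℙ {ω | ∀ n < 2 ^ k,
          X n ω < Real.sqrt (2 * Real.log 2 * k * (1 - 1 / Real.sqrt k))}).toReal ≤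
        Real.exp (-((2 : ℝ) ^ (Real.sqrt k) * (Real.sqrt (2 * Real.pi))⁻¹ *
          (Real.sqrt (2 * Real.log 2 * k * (1 - 1 / Real.sqrt k)) /
            (1 + 2 * Real.log 2 * k * (1 - 1 / Real.sqrt k)))))) ∧
    Tendsto (fun k : ℕ => (2 : ℝ) ^ k *
        (ℙ {ω | ∀ n < 2 ^ k,
          X n ω < Real.sqrt (2 * Real.log 2 * k * (1 - 1 / Real.sqrt k))}).toReal)
      atTop (nhds 0) := by
  refine ⟨part1 X hXm hXd hindep, ?_⟩
  apply squeeze_zero' (g := fun k : ℕ => Real.exp ((k:ℝ) - (k:ℝ)^2/26873856))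
  · exact Eventually.of_forall fun k => by positivity
  · filter_upwards [eventually_ge_atTop 4] with k hk4
    have hk1 : 1 ≤ k := le_trans (by norm_num) hk4
    have h1 := part1 X hXm hXd hindep k hk1
    set E : ℝ := (2 : ℝ) ^ (Real.sqrt k) * (Real.sqrt (2 * Real.pi))⁻¹ *
      (Real.sqrt (2 * Real.log 2 * k * (1 - 1 / Real.sqrt k)) /
        (1 + 2 * Real.log 2 * k * (1 - 1 / Real.sqrt k))) with hE_def
    have hE := Ek_ge k hk4
    calc (2:ℝ)^k * (ℙ {ω | ∀ n < 2 ^ k,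
            X n ω < Real.sqrt (2 * Real.log 2 * k * (1 - 1 / Real.sqrt k))}).toReal
        ≤ (2:ℝ)^k * Real.exp (-E) := mul_le_mul_of_nonneg_left h1 (by positivity)
      _ = Real.exp (Real.log 2 * k - E) := by
          rw [← Real.rpow_natCast 2 k, Real.rpow_def_of_pos two_pos, ← Real.exp_add,
            sub_eq_add_neg]
      _ ≤ Real.exp ((k:ℝ) - (k:ℝ)^2/26873856) := by
          rw [Real.exp_le_exp]
          have hl2' : Real.log 2 ≤ 1 := by
            have := Real.log_two_lt_d9; linarith
          have hk0 : (0:ℝ) ≤ k := Nat.cast_nonneg k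
          have : Real.log 2 * k ≤ k := by nlinarith
          linarith
  · apply Real.tendsto_exp_atBot.comp
    refine tendsto_atBot_mono' atTop (f₁ := fun k : ℕ => -(k:ℝ)) ?_ ?_
    · filter_upwards [eventually_ge_atTop (2*26873856 : ℕ)] with k hk
      have hkr : (2*26873856 : ℝ) ≤ k := by exact_mod_cast hk
      have hk0 : (0:ℝ) ≤ k := by linarith
      have : 2*(k:ℝ) ≤ (k:ℝ)^2/26873856 := by
        rw [le_div_iff₀ (by norm_num)]
        nlinarith
      linarith
    · exact tendsto_neg_atTop_atBot.comp tendsto_natCast_atTop_atTop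
end

section
/- Fix ρ ∈ (0,1], ρ̄ = √(1−ρ²), and V ∈ ℝ. Let Z be standard normal, and let U be a random variable independent of Z whose law is that of a standard normal conditioned to be at most V (i.e., U has density (1/(1−Q(V)))·(1/√(2π))·e^{−x²/2} on (−∞, V] and 0 above V). Let 𝐯 be any standard normal random variable. Then for every a ∈ ℝ: P(a < ρ·U + ρ̄·Z) ≥ P(a < 𝐯) − Q(V), where Q(x) = ∫_x^∞ (1/√(2π)) e^{−t²/2} dt. -/
open MeasureTheory ProbabilityTheory

/-- The Gaussian tail function `Q(x) = ∫_x^∞ (1/√(2π)) e^{−t²/2} dt`. -/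
noncomputable def gaussQ (x : ℝ) : ℝ :=
  ∫ t in Set.Ioi x, (Real.sqrt (2 * Real.pi))⁻¹ * Real.exp (-t ^ 2 / 2)

section Aux

lemma gaussianPDFReal_zero_one (x : ℝ) :
    gaussianPDFReal 0 1 x = (Real.sqrt (2 * Real.pi))⁻¹ * Real.exp (-x ^ 2 / 2) := by
  simp [gaussianPDFReal]

lemma gaussQ_eq (x : ℝ) : gaussQ x = ((gaussianReal 0 1) (Set.Ioi x)).toReal := by
  rw [gaussianReal_apply_eq_integral 0 one_ne_zero, ENNReal.toReal_ofReal
    (integral_nonneg fun t => gaussianPDFReal_nonneg _ _ _)]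
  unfold gaussQ
  simp_rw [gaussianPDFReal_zero_one]

/-- Rotation as a linear map on `EuclideanSpace ℝ (Fin 2)`. -/
noncomputable def rotMap (ρ c : ℝ) : EuclideanSpace ℝ (Fin 2) →ₗ[ℝ] EuclideanSpace ℝ (Fin 2) where
  toFun v := WithLp.toLp 2 ![ρ * v 0 + c * v 1, -c * v 0 + ρ * v 1]
  map_add' v w := by
    ext i
    fin_cases i <;>
      simp [PiLp.add_apply] <;> ring
  map_smul' r v := by
    ext i
    fin_cases i <;>
      simp [PiLp.smul_apply, smul_eq_mul] <;> ring

lemma rotMap_apply (ρ c : ℝ) (v : EuclideanSpace ℝ (Fin 2)) :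
    rotMap ρ c v = WithLp.toLp 2 ![ρ * v 0 + c * v 1, -c * v 0 + ρ * v 1] := rfl

/-- Rotation as a linear equiv. -/
noncomputable def rotEquiv {ρ c : ℝ} (h : ρ ^ 2 + c ^ 2 = 1) :
    EuclideanSpace ℝ (Fin 2) ≃ₗ[ℝ] EuclideanSpace ℝ (Fin 2) :=
  LinearEquiv.ofLinear (rotMap ρ c) (rotMap ρ (-c))
    (by
      refine LinearMap.ext fun v => ?_
      ext i
      simp only [LinearMap.comp_apply, LinearMap.id_apply, rotMap_apply]
      fin_cases i <;> simp <;> [linear_combination (v 0) * h; linear_combination (v 1) * h])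
    (by
      refine LinearMap.ext fun v => ?_
      ext i
      simp only [LinearMap.comp_apply, LinearMap.id_apply, rotMap_apply]
      fin_cases i <;> simp <;> [linear_combination (v 0) * h; linear_combination (v 1) * h])

/-- Rotation as a linear isometry equiv. -/
noncomputable def rotIso {ρ c : ℝ} (h : ρ ^ 2 + c ^ 2 = 1) :
    EuclideanSpace ℝ (Fin 2) ≃ₗᵢ[ℝ] EuclideanSpace ℝ (Fin 2) :=
  (rotEquiv h).isometryOfInner (by
    intro x y
    simp only [rotEquiv, LinearEquiv.ofLinear_apply, rotMap_apply, PiLp.inner_apply,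
      RCLike.inner_apply, conj_trivial, Fin.sum_univ_two, Matrix.cons_val_zero,
      Matrix.cons_val_one, Matrix.head_cons]
    linear_combination (x 0 * y 0 + x 1 * y 1) * h)

/-- Identification of the euclidean plane with `ℝ × ℝ`. -/
noncomputable def phiE : EuclideanSpace ℝ (Fin 2) ≃ᵐ ℝ × ℝ :=
  (MeasurableEquiv.toLp 2 (Fin 2 → ℝ)).symm.trans MeasurableEquiv.finTwoArrow

lemma phiE_measurePreserving : MeasurePreserving phiE volume volume :=
  (volume_preserving_finTwoArrow ℝ).comp (EuclideanSpace.volume_preserving_symm_measurableEquiv_toLp (Fin 2))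

/-- The rotation as a measurable equiv of `ℝ × ℝ`. -/
noncomputable def rotT {ρ c : ℝ} (h : ρ ^ 2 + c ^ 2 = 1) : (ℝ × ℝ) ≃ᵐ (ℝ × ℝ) :=
  phiE.symm.trans (((rotIso h).toHomeomorph.toMeasurableEquiv).trans phiE)

lemma rotT_apply {ρ c : ℝ} (h : ρ ^ 2 + c ^ 2 = 1) (p : ℝ × ℝ) :
    rotT h p = (ρ * p.1 + c * p.2, -c * p.1 + ρ * p.2) := by
  rfl

lemma rotT_measurePreserving {ρ c : ℝ} (h : ρ ^ 2 + c ^ 2 = 1) :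
    MeasurePreserving (rotT h) volume volume :=
  (phiE_measurePreserving.comp
    ((rotIso h).measurePreserving.comp phiE_measurePreserving.symm))

lemma gauss_prod_eq_withDensity :
    (gaussianReal 0 1).prod (gaussianReal 0 1)
      = (volume : Measure (ℝ × ℝ)).withDensity
          (fun p => gaussianPDF 0 1 p.1 * gaussianPDF 0 1 p.2) := by
  refine Measure.prod_eq fun s t hs ht => ?_
  rw [withDensity_apply _ (hs.prod ht), Measure.volume_eq_prod, ← Measure.prod_restrict,
    lintegral_prod_mul (measurable_gaussianPDF 0 1).aemeasurable
      (measurable_gaussianPDF 0 1).aemeasurable,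
    gaussianReal_apply 0 one_ne_zero, gaussianReal_apply 0 one_ne_zero]

lemma gaussianPDFReal_rot {ρ c : ℝ} (h : ρ ^ 2 + c ^ 2 = 1) (x y : ℝ) :
    gaussianPDFReal 0 1 (ρ * x + c * y) * gaussianPDFReal 0 1 (-c * x + ρ * y)
      = gaussianPDFReal 0 1 x * gaussianPDFReal 0 1 y := by
  simp only [gaussianPDFReal, NNReal.coe_one, mul_one, sub_zero]
  rw [mul_mul_mul_comm, ← Real.exp_add, mul_mul_mul_comm, ← Real.exp_add]
  congr 1
  have : (ρ * x + c * y) ^ 2 + (-c * x + ρ * y) ^ 2 = x ^ 2 + y ^ 2 := by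
    linear_combination (x ^ 2 + y ^ 2) * h
  rw [Real.exp_eq_exp]
  linear_combination (-1 / 2 : ℝ) * this

lemma map_rot {ρ c : ℝ} (h : ρ ^ 2 + c ^ 2 = 1) :
    Measure.map (fun p : ℝ × ℝ => ρ * p.1 + c * p.2)
      ((gaussianReal 0 1).prod (gaussianReal 0 1)) = gaussianReal 0 1 := by
  have hfm : Measurable fun p : ℝ × ℝ => ρ * p.1 + c * p.2 := by fun_prop
  ext s hs
  set D : ℝ × ℝ → ENNReal := fun p => gaussianPDF 0 1 p.1 * gaussianPDF 0 1 p.2 with hD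
  have hpre : (fun p : ℝ × ℝ => ρ * p.1 + c * p.2) ⁻¹' s
      = (rotT h) ⁻¹' (s ×ˢ Set.univ) := by
    ext p
    simp [rotT_apply h, Set.mem_prod]
  have hinv : ∀ p : ℝ × ℝ, D (rotT h p) = D p := by
    intro p
    rw [rotT_apply h]
    show ENNReal.ofReal (gaussianPDFReal 0 1 (ρ * p.1 + c * p.2))
        * ENNReal.ofReal (gaussianPDFReal 0 1 (-c * p.1 + ρ * p.2))
      = ENNReal.ofReal (gaussianPDFReal 0 1 p.1) * ENNReal.ofReal (gaussianPDFReal 0 1 p.2)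
    rw [← ENNReal.ofReal_mul (gaussianPDFReal_nonneg _ _ _),
      ← ENNReal.ofReal_mul (gaussianPDFReal_nonneg _ _ _), gaussianPDFReal_rot h]
  rw [Measure.map_apply hfm hs, gauss_prod_eq_withDensity, withDensity_apply _ (hfm hs)]
  calc ∫⁻ p in (fun p : ℝ × ℝ => ρ * p.1 + c * p.2) ⁻¹' s, D p
      = ∫⁻ p in (rotT h) ⁻¹' (s ×ˢ Set.univ), D (rotT h p) := by
        rw [hpre]
        exact lintegral_congr fun p => (hinv p).symm
    _ = ∫⁻ q in s ×ˢ Set.univ, D q :=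
        (rotT_measurePreserving h).setLIntegral_comp_preimage_emb
          (rotT h).measurableEmbedding D _
    _ = ((gaussianReal 0 1).prod (gaussianReal 0 1)) (s ×ˢ Set.univ) := by
        rw [gauss_prod_eq_withDensity, withDensity_apply _ (hs.prod MeasurableSet.univ)]
    _ = gaussianReal 0 1 s := by
        rw [Measure.prod_prod, measure_univ, mul_one]

end Aux

/-- **Lemma 2.**
Let `Z` be standard normal and `U` independent of `Z` with the law of a
standard normal conditioned to be at most `V` (upper-truncated standard
Gaussian). Let `W` be any standard normal random variable. Then for every
`a ∈ ℝ`, `P(a < ρ·U + ρ̄·Z) ≥ P(a < W) − Q(V)`. -/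
theorem truncated_gaussian_tail_lower_bound
    {Ω : Type*} [MeasureSpace Ω] [IsProbabilityMeasure (ℙ : Measure Ω)]
    (ρ : ℝ) (hρ : ρ ∈ Set.Ioc (0 : ℝ) 1) (V : ℝ)
    (Z U W : Ω → ℝ)
    (hZm : Measurable Z) (hUm : Measurable U) (hWm : Measurable W)
    (hZd : Measure.map Z ℙ = gaussianReal 0 1)
    (hUd : Measure.map U ℙ =
      (ENNReal.ofReal (1 - gaussQ V))⁻¹ • ((gaussianReal 0 1).restrict (Set.Iic V)))
    (hWd : Measure.map W ℙ = gaussianReal 0 1)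
    (hindep : IndepFun U Z ℙ)
    (a : ℝ) :
    (ℙ {ω | a < W ω}).toReal - gaussQ V ≤
      (ℙ {ω | a < ρ * U ω + Real.sqrt (1 - ρ ^ 2) * Z ω}).toReal := by
  obtain ⟨hρ0, hρ1⟩ := hρ
  set γ : Measure ℝ := gaussianReal 0 1 with hγ
  set c : ℝ := Real.sqrt (1 - ρ ^ 2) with hc
  have hc2 : ρ ^ 2 + c ^ 2 = 1 := by
    rw [hc, Real.sq_sqrt (by nlinarith)]
    ring
  have hQV : gaussQ V = (γ (Set.Ioi V)).toReal := gaussQ_eq V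
  have hW : ℙ {ω | a < W ω} = γ (Set.Ioi a) := by
    show ℙ (W ⁻¹' Set.Ioi a) = γ (Set.Ioi a)
    rw [← Measure.map_apply hWm measurableSet_Ioi, hWd]
  -- the set in the product space
  set f : ℝ × ℝ → ℝ := fun p => ρ * p.1 + c * p.2 with hf
  have hfm : Measurable f := by fun_prop
  set S : Set (ℝ × ℝ) := f ⁻¹' Set.Ioi a with hS
  have hSm : MeasurableSet S := hfm measurableSet_Ioi
  have hXm : Measurable fun ω => ρ * U ω + c * Z ω := by fun_prop
  set k : ENNReal := ENNReal.ofReal (1 - gaussQ V) with hkdef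
  -- express the probability as a product measure
  have hprod : Measure.map (fun ω => (U ω, Z ω)) ℙ
      = (Measure.map U ℙ).prod (Measure.map Z ℙ) :=
    (indepFun_iff_map_prod_eq_prod_map_map hUm.aemeasurable hZm.aemeasurable).mp hindep
  have hPX : ℙ {ω | a < ρ * U ω + c * Z ω}
      = ((k⁻¹ • (γ.restrict (Set.Iic V))).prod γ) S := by
    show ℙ ((fun ω => ρ * U ω + c * Z ω) ⁻¹' Set.Ioi a) = _
    rw [← Measure.map_apply hXm measurableSet_Ioi]
    have hcomp : (fun ω => ρ * U ω + c * Z ω) = f ∘ (fun ω => (U ω, Z ω)) := rfl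
    rw [hcomp, ← Measure.map_map hfm (hUm.prodMk hZm), hprod, hUd, hZd,
      Measure.map_apply hfm measurableSet_Ioi]
  -- facts about the normalizing constant
  have hsplit : γ (Set.Iic V) + γ (Set.Ioi V) = 1 := by
    rw [← measure_union (Set.Iic_disjoint_Ioi le_rfl) measurableSet_Ioi,
      Set.Iic_union_Ioi, measure_univ]
  have hk : k = γ (Set.Iic V) := by
    have h1 : (γ (Set.Iic V)).toReal + (γ (Set.Ioi V)).toReal = 1 := by
      rw [← ENNReal.toReal_add (measure_ne_top _ _) (measure_ne_top _ _), hsplit]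
      simp
    have h2 : (1 : ℝ) - gaussQ V = (γ (Set.Iic V)).toReal := by
      rw [hQV]; linarith
    rw [hkdef, h2, ENNReal.ofReal_toReal (measure_ne_top _ _)]
  have hk1 : k ≤ 1 := hk ▸ prob_le_one
  have hki : 1 ≤ k⁻¹ := ENNReal.one_le_inv.mpr hk1
  -- compare with the untruncated product measure
  have hsmul : ((k⁻¹ • (γ.restrict (Set.Iic V))).prod γ) S
      = k⁻¹ * ((γ.restrict (Set.Iic V)).prod γ) S := by
    rw [Measure.prod_apply hSm, Measure.prod_apply hSm, lintegral_smul_measure, smul_eq_mul]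
  have hmono : ((γ.restrict (Set.Iic V)).prod γ) S
      ≤ ((k⁻¹ • (γ.restrict (Set.Iic V))).prod γ) S := by
    rw [hsmul]
    calc ((γ.restrict (Set.Iic V)).prod γ) S
        = 1 * ((γ.restrict (Set.Iic V)).prod γ) S := (one_mul _).symm
      _ ≤ k⁻¹ * ((γ.restrict (Set.Iic V)).prod γ) S := mul_le_mul_left hki _
  have hrest : (γ.restrict (Set.Iic V)).prod γ
      = (γ.prod γ).restrict (Set.Iic V ×ˢ Set.univ) :=
    Measure.restrict_prod_eq_prod_univ _
  have hrot : (γ.prod γ) S = γ (Set.Ioi a) := by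
    calc (γ.prod γ) S = (Measure.map f (γ.prod γ)) (Set.Ioi a) :=
          (Measure.map_apply hfm measurableSet_Ioi).symm
      _ = γ (Set.Ioi a) := by
          rw [hγ]
          exact congrArg (fun m : Measure ℝ => m (Set.Ioi a)) (map_rot hc2)
  have hsub : S ⊆ (S ∩ (Set.Iic V ×ˢ Set.univ)) ∪ ((Set.Ioi V) ×ˢ (Set.univ : Set ℝ)) := by
    intro p hp
    by_cases hpV : p.1 ≤ V
    · exact Or.inl ⟨hp, hpV, trivial⟩
    · exact Or.inr ⟨lt_of_not_ge hpV, trivial⟩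
  have key : γ (Set.Ioi a) ≤ ℙ {ω | a < ρ * U ω + c * Z ω} + γ (Set.Ioi V) := by
    calc γ (Set.Ioi a) = (γ.prod γ) S := hrot.symm
      _ ≤ (γ.prod γ) ((S ∩ (Set.Iic V ×ˢ Set.univ)) ∪ ((Set.Ioi V) ×ˢ Set.univ)) :=
          measure_mono hsub
      _ ≤ (γ.prod γ) (S ∩ (Set.Iic V ×ˢ Set.univ)) + (γ.prod γ) ((Set.Ioi V) ×ˢ Set.univ) :=
          measure_union_le _ _
      _ = ((γ.restrict (Set.Iic V)).prod γ) S + γ (Set.Ioi V) := by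
          rw [hrest, Measure.restrict_apply hSm, Measure.prod_prod, measure_univ, mul_one]
      _ ≤ ((k⁻¹ • (γ.restrict (Set.Iic V))).prod γ) S + γ (Set.Ioi V) :=
          add_le_add_left hmono _
      _ = ℙ {ω | a < ρ * U ω + c * Z ω} + γ (Set.Ioi V) := by rw [hPX]
  have hfin : ℙ {ω | a < ρ * U ω + c * Z ω} + γ (Set.Ioi V) ≠ ⊤ :=
    ENNReal.add_ne_top.mpr ⟨measure_ne_top _ _, measure_ne_top _ _⟩
  have hle := ENNReal.toReal_mono hfin key
  rw [ENNReal.toReal_add (measure_ne_top _ _) (measure_ne_top _ _)] at hle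
  rw [hW, hQV]
  linarith
end
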